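/- All orientations of a tree are related by iterated sink/source reflections: for any finite tree G and any two orientations of its edges, one orientation can be transformed into the other by a sequence of reflections, where a reflection at a sink or source vertex reverses all edges incident to that vertex. -/

import Mathlib

/-- An orientation of a simple graph `G`: a relation supported on edges of `G`,
choosing exactly one direction for each edge. -/
def IsOrientation {V : Type*} (G : SimpleGraph V) (o : V → V → Prop) : Prop :=
  (∀ u v, o u v → G.Adj u v) ∧ (∀ u v, G.Adj u v → (o u v ↔ ¬ o v u))

/-- Reversing all edges incident to the vertex `v`. -/
def reflectAt {V : Type*} (o : V → V → Prop) (v : V) : V → V → Prop :=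
  fun u w => ((u = v ∨ w = v) ∧ o w u) ∨ (¬(u = v ∨ w = v) ∧ o u w)

/-- One sink/source reflection move: reflect at a vertex which is a sink
(all incident edges point in) or a source (all incident edges point out). -/
def ReflectionStep {V : Type*} (G : SimpleGraph V) (o o' : V → V → Prop) : Prop :=
  ∃ v : V, ((∀ u, G.Adj u v → o u v) ∨ (∀ u, G.Adj u v → o v u)) ∧ o' = reflectAt o v

open SimpleGraph
open scoped Classical

noncomputable section
namespace TreeRefl

variable {V : Type*} {G : SimpleGraph V}

/-- weight of a walk -/
def wgt (o : V → V → Prop) {a b : V} (p : G.Walk a b) : ℤ :=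
  (p.darts.map (fun d => if o d.toProd.1 d.toProd.2 then (1:ℤ) else -1)).sum

lemma wgt_append (o : V → V → Prop) {a b c : V} (p : G.Walk a b) (q : G.Walk b c) :
    wgt o (p.append q) = wgt o p + wgt o q := by
  simp [wgt, SimpleGraph.Walk.darts_append]

lemma wgt_concat (o : V → V → Prop) {a b c : V} (p : G.Walk a b) (h : G.Adj b c) :
    wgt o (p.concat h) = wgt o p + (if o b c then (1:ℤ) else -1) := by
  simp [wgt, SimpleGraph.Walk.darts_concat, List.concat_eq_append]

/-- a chosen path from `r` to `v` -/
def thePath (hG : G.IsTree) (r v : V) : G.Path r v :=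
  (Classical.choice (hG.isConnected.preconnected r v)).toPath

/-- the potential of an orientation -/
def pot (hG : G.IsTree) (r : V) (o : V → V → Prop) (v : V) : ℤ :=
  wgt o (thePath hG r v : G.Walk r v)

lemma pot_root (hG : G.IsTree) (r : V) (o : V → V → Prop) : pot hG r o r = 0 := by
  have : thePath hG r r = SimpleGraph.Path.nil := hG.IsAcyclic.path_unique _ _
  simp [pot, this, wgt, SimpleGraph.Path.nil]


lemma pot_step (hG : G.IsTree) (r : V) {o : V → V → Prop} (ho : IsOrientation G o)
    {u v : V} (huv : o u v) : pot hG r o v = pot hG r o u + 1 := by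
  have hadj : G.Adj u v := ho.1 u v huv
  have hnvu : ¬ o v u := (ho.2 u v hadj).1 huv
  obtain ⟨⟨p, hpp⟩, hup⟩ : ∃ q : G.Path r u, pot hG r o u = wgt o (q : G.Walk r u) :=
    ⟨thePath hG r u, rfl⟩
  have hup' : pot hG r o u = wgt o p := hup
  by_cases hv : v ∈ p.support
  · have htp : (p.takeUntil v hv).IsPath := hpp.takeUntil hv
    have hdp : (p.dropUntil v hv).IsPath := hpp.dropUntil hv
    have hedge : (SimpleGraph.Walk.cons hadj.symm SimpleGraph.Walk.nil : G.Walk v u).IsPath := by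
      simp [SimpleGraph.Walk.cons_isPath_iff]
      exact fun h => hadj.ne h.symm
    have hdrop : p.dropUntil v hv = SimpleGraph.Walk.cons hadj.symm SimpleGraph.Walk.nil :=
      congrArg Subtype.val (hG.IsAcyclic.path_unique ⟨p.dropUntil v hv, hdp⟩ ⟨_, hedge⟩)
    have htake : (thePath hG r v : G.Walk r v) = p.takeUntil v hv :=
      congrArg Subtype.val (hG.IsAcyclic.path_unique (thePath hG r v) ⟨p.takeUntil v hv, htp⟩)
    have hsplit : (p.takeUntil v hv).append (p.dropUntil v hv) = p :=
      SimpleGraph.Walk.take_spec p hv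
    have e1 : wgt o (p.takeUntil v hv) + wgt o (p.dropUntil v hv) = wgt o p := by
      rw [← wgt_append, hsplit]
    have e2 : wgt o (p.dropUntil v hv) = -1 := by
      rw [hdrop]; simp [wgt, if_neg hnvu]
    have e3 : pot hG r o v = wgt o (p.takeUntil v hv) := by rw [pot, htake]
    rw [e3]; omega
  · have hcp : (p.concat hadj).IsPath := by
      rw [← SimpleGraph.Walk.isPath_reverse_iff, SimpleGraph.Walk.reverse_concat]
      rw [SimpleGraph.Walk.cons_isPath_iff]
      exact ⟨hpp.reverse, by simpa using hv⟩
    have htake : (thePath hG r v : G.Walk r v) = p.concat hadj :=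
      congrArg Subtype.val (hG.IsAcyclic.path_unique (thePath hG r v) ⟨p.concat hadj, hcp⟩)
    rw [pot, htake, wgt_concat, if_pos huv, hup']

lemma ori_total {o : V → V → Prop} (ho : IsOrientation G o) {u v : V} (h : G.Adj u v) :
    o u v ∨ o v u := by
  by_cases h1 : o u v
  · exact Or.inl h1
  · exact Or.inr (not_not.mp (fun h2 => h1 ((ho.2 u v h).2 h2)))

lemma pot_adj (hG : G.IsTree) (r : V) {o : V → V → Prop} (ho : IsOrientation G o)
    {u v : V} (h : G.Adj u v) :
    (o u v ∧ pot hG r o v = pot hG r o u + 1) ∨ (o v u ∧ pot hG r o v = pot hG r o u - 1) := by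
  rcases ori_total ho h with h1 | h1
  · exact Or.inl ⟨h1, pot_step hG r ho h1⟩
  · refine Or.inr ⟨h1, ?_⟩
    have := pot_step hG r ho h1
    omega

lemma diff_const_on_walk (hG : G.IsTree) (r : V) {o : V → V → Prop} (ho : IsOrientation G o)
    (g : V → ℤ) (hstep : ∀ u w, o u w → g w = g u + 1) :
    ∀ {a b : V} (_ : G.Walk a b), g a - pot hG r o a = g b - pot hG r o b := by
  intro a b p
  induction p with
  | nil => rfl
  | @cons a c b hadj q ih =>
    rcases pot_adj hG r ho hadj with ⟨h1, e1⟩ | ⟨h1, e1⟩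
    · have := hstep a c h1; omega
    · have := hstep c a h1; omega

/-- uniqueness of the potential -/
lemma pot_unique (hG : G.IsTree) (r : V) {o : V → V → Prop} (ho : IsOrientation G o)
    (g : V → ℤ) (hr : g r = 0) (hstep : ∀ u w, o u w → g w = g u + 1) :
    ∀ v, g v = pot hG r o v := by
  intro v
  obtain ⟨p⟩ := hG.isConnected.preconnected v r
  have := diff_const_on_walk hG r ho g hstep p
  rw [hr, pot_root] at this
  omega

lemma ori_of_pot_eq (hG : G.IsTree) (r : V) {o₁ o₂ : V → V → Prop}
    (h₁ : IsOrientation G o₁) (h₂ : IsOrientation G o₂)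
    (h : ∀ v, pot hG r o₁ v = pot hG r o₂ v) : o₁ = o₂ := by
  funext u v
  apply propext
  constructor
  · intro h1
    have hadj := h₁.1 u v h1
    have e1 := pot_step hG r h₁ h1
    rcases pot_adj hG r h₂ hadj with ⟨h2, _⟩ | ⟨_, e2⟩
    · exact h2
    · rw [h u, h v] at e1; omega
  · intro h2
    have hadj := h₂.1 u v h2
    have e2 := pot_step hG r h₂ h2
    rcases pot_adj hG r h₁ hadj with ⟨h1, _⟩ | ⟨_, e1⟩
    · exact h1
    · rw [← h u, ← h v] at e2; omega

lemma even_diff_on_walk (hG : G.IsTree) (r : V) {o₁ o₂ : V → V → Prop}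
    (h₁ : IsOrientation G o₁) (h₂ : IsOrientation G o₂) :
    ∀ {a b : V} (_ : G.Walk a b),
      Even ((pot hG r o₁ a - pot hG r o₂ a) - (pot hG r o₁ b - pot hG r o₂ b)) := by
  intro a b p
  induction p with
  | nil => exact ⟨0, by ring⟩
  | @cons a c b hadj q ih =>
    have h0 : Even ((pot hG r o₁ a - pot hG r o₂ a) - (pot hG r o₁ c - pot hG r o₂ c)) := by
      rcases pot_adj hG r h₁ hadj with ⟨_, e1⟩ | ⟨_, e1⟩ <;>
        rcases pot_adj hG r h₂ hadj with ⟨_, e2⟩ | ⟨_, e2⟩ <;>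
        first
          | exact ⟨0, by omega⟩
          | exact ⟨-1, by omega⟩
          | exact ⟨1, by omega⟩
    obtain ⟨k, hk⟩ := h0
    obtain ⟨m, hm⟩ := ih
    exact ⟨k + m, by omega⟩

lemma even_pot_sub (hG : G.IsTree) (r : V) {o₁ o₂ : V → V → Prop}
    (h₁ : IsOrientation G o₁) (h₂ : IsOrientation G o₂) (v : V) :
    Even (pot hG r o₁ v - pot hG r o₂ v) := by
  obtain ⟨p⟩ := hG.isConnected.preconnected v r
  have := even_diff_on_walk hG r h₁ h₂ p
  rw [pot_root, pot_root] at this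
  simpa using this

lemma reflect_isOrientation {o : V → V → Prop} (ho : IsOrientation G o) (v : V) :
    IsOrientation G (reflectAt o v) := by
  constructor
  · rintro u w (⟨_, h⟩ | ⟨_, h⟩)
    · exact (ho.1 w u h).symm
    · exact ho.1 u w h
  · intro u w hadj
    unfold reflectAt
    by_cases hc : u = v ∨ w = v
    · have hc' : w = v ∨ u = v := hc.symm
      simp only [hc, hc', true_and, not_true_eq_false, false_and, or_false]
      exact ho.2 w u hadj.symm
    · have hc' : ¬ (w = v ∨ u = v) := fun h => hc h.symm
      simp only [hc, hc', false_and, not_false_eq_true, true_and, false_or]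
      exact ho.2 u w hadj

/-- effect of reflecting at a sink `v ≠ r` on the potential -/
lemma pot_reflect_sink (hG : G.IsTree) (r : V) {o : V → V → Prop} (ho : IsOrientation G o)
    {v : V} (hsink : ∀ u, G.Adj u v → o u v) (hvr : v ≠ r) (w : V) :
    pot hG r (reflectAt o v) w = if w = v then pot hG r o v - 2 else pot hG r o w := by
  have ho' := reflect_isOrientation (G := G) ho v
  have key := pot_unique hG r ho' (fun w => if w = v then pot hG r o v - 2 else pot hG r o w)
    (by simp [if_neg (Ne.symm hvr), pot_root]) ?_ w
  · exact key.symm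
  · rintro u w (⟨hc, h⟩ | ⟨hc, h⟩)
    · -- (u = v ∨ w = v) and o w u
      have hadj : G.Adj w u := ho.1 w u h
      rcases hc with hcu | hcw
      · rw [hcu] at h hadj ⊢
        -- u = v, h : o w v (edge w→v in o, fine since v sink); o' v w holds
        -- g w = pot o w = pot o v - 1;  g v = pot o v - 2
        have hwv : w ≠ v := hadj.ne
        have e : pot hG r o v = pot hG r o w + 1 := pot_step hG r ho h
        simp only [if_neg hwv, if_pos rfl, if_true]
        omega
      · rw [hcw] at h hadj
        -- w = v, h : o v u ; but sink says o u v : contradiction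
        have h2 : o u v := hsink u (ho.1 v u h).symm
        exact absurd h ((ho.2 u v (ho.1 v u h).symm).1 h2)
    · push_neg at hc
      have e : pot hG r o w = pot hG r o u + 1 := pot_step hG r ho h
      simp only [if_neg hc.1, if_neg hc.2]
      exact e

lemma reflect_reflect (o : V → V → Prop) (v : V) : reflectAt (reflectAt o v) v = o := by
  funext u w
  apply propext
  unfold reflectAt
  by_cases hc : u = v ∨ w = v
  · have hc' : w = v ∨ u = v := hc.symm
    simp [hc, hc']
  · have hc' : ¬ (w = v ∨ u = v) := fun h => hc h.symm
    simp [hc, hc']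

lemma reflectionStep_symm {o o' : V → V → Prop} (h : ReflectionStep G o o') :
    ReflectionStep G o' o := by
  obtain ⟨v, hv, rfl⟩ := h
  refine ⟨v, ?_, (reflect_reflect o v).symm⟩
  rcases hv with hv | hv
  · exact Or.inr fun u hu => Or.inl ⟨Or.inl rfl, hv u hu⟩
  · exact Or.inl fun u hu => Or.inl ⟨Or.inr rfl, hv u hu⟩

lemma step_exists [Fintype V] (hG : G.IsTree) (r : V)
    {o₁ o₂ : V → V → Prop} (h₁ : IsOrientation G o₁) (h₂ : IsOrientation G o₂)
    (hex : ∃ w, pot hG r o₂ w < pot hG r o₁ w) :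
    ∃ o₁', ReflectionStep G o₁ o₁' ∧ IsOrientation G o₁' ∧
      (∑ w, (pot hG r o₁' w - pot hG r o₂ w).natAbs) + 2
        = ∑ w, (pot hG r o₁ w - pot hG r o₂ w).natAbs := by
  obtain ⟨w0, hw0⟩ := hex
  set f₁ := pot hG r o₁ with hf₁
  set f₂ := pot hG r o₂ with hf₂
  -- maximize f₁ - f₂
  obtain ⟨v₁, -, hv₁⟩ := Finset.exists_max_image Finset.univ (fun w => f₁ w - f₂ w)
    ⟨w0, Finset.mem_univ w0⟩
  set M := f₁ v₁ - f₂ v₁ with hM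
  have hv₁' : ∀ a, f₁ a - f₂ a ≤ M := fun a => hv₁ a (Finset.mem_univ a)
  have hMpos : 0 < M := lt_of_lt_of_le (by omega) (hv₁' w0)
  have hMeven : Even M := even_pot_sub hG r h₁ h₂ v₁
  have hM2 : 2 ≤ M := by obtain ⟨k, hk⟩ := hMeven; omega
  -- among maximizers, maximize f₁
  set T : Finset V := Finset.univ.filter (fun w => f₁ w - f₂ w = M) with hT
  obtain ⟨v, hvT, hv⟩ := Finset.exists_max_image T f₁ ⟨v₁, by simp [hT]; exact hM.symm⟩
  have hDv : f₁ v - f₂ v = M := by simpa [hT] using hvT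
  have hvr : v ≠ r := by
    intro h
    have h0 : f₁ r - f₂ r = 0 := by rw [hf₁, hf₂, pot_root, pot_root]; ring
    rw [h, h0] at hDv; omega
  have hsink : ∀ u, G.Adj u v → o₁ u v := by
    intro u hu
    rcases pot_adj hG r h₁ hu with ⟨h1, _⟩ | ⟨h1, e1⟩
    · exact h1
    · exfalso
      -- f₁ u = f₁ v + 1
      have e1' : f₁ u = f₁ v + 1 := by rw [hf₁]; omega
      rcases pot_adj hG r h₂ hu with ⟨_, e2⟩ | ⟨_, e2⟩
      · -- f₂ v = f₂ u + 1, so f₂ u = f₂ v - 1, D u = M + 2 > M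
        have : f₁ u - f₂ u ≤ M := hv₁' u
        rw [← hf₂] at e2; omega
      · -- f₂ u = f₂ v + 1, so D u = M, and f₁ u > f₁ v : contradicts maximality
        have hDu : f₁ u - f₂ u = M := by rw [← hf₂] at e2; omega
        have huT : u ∈ T := by simp [hT, hDu]
        have := hv u huT
        omega
  refine ⟨reflectAt o₁ v, ⟨v, Or.inl hsink, rfl⟩, reflect_isOrientation h₁ v, ?_⟩
  have hpot : ∀ w, pot hG r (reflectAt o₁ v) w = if w = v then f₁ v - 2 else f₁ w :=
    pot_reflect_sink hG r h₁ hsink hvr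
  have key : ∀ w, (pot hG r (reflectAt o₁ v) w - f₂ w).natAbs
      = if w = v then (M - 2).natAbs else (f₁ w - f₂ w).natAbs := by
    intro w
    rw [hpot w]
    by_cases hw : w = v
    · rw [if_pos hw, if_pos hw, hw]
      congr 1
      omega
    · rw [if_neg hw, if_neg hw]
  calc (∑ w, (pot hG r (reflectAt o₁ v) w - f₂ w).natAbs) + 2
      = (∑ w, if w = v then (M - 2).natAbs else (f₁ w - f₂ w).natAbs) + 2 := by
        rw [Finset.sum_congr rfl fun w _ => key w]
    _ = ((∑ w ∈ Finset.univ.erase v, (f₁ w - f₂ w).natAbs) + (M - 2).natAbs) + 2 := by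
        rw [← Finset.sum_erase_add _ _ (Finset.mem_univ v), if_pos rfl]
        have he : (∑ x ∈ Finset.univ.erase v,
              if x = v then (M - 2).natAbs else (f₁ x - f₂ x).natAbs)
            = ∑ x ∈ Finset.univ.erase v, (f₁ x - f₂ x).natAbs :=
          Finset.sum_congr rfl fun x hx => if_neg (Finset.ne_of_mem_erase hx)
        rw [he]
    _ = (∑ w ∈ Finset.univ.erase v, (f₁ w - f₂ w).natAbs) + (f₁ v - f₂ v).natAbs := by
        rw [hDv]; omega
    _ = ∑ w, (f₁ w - f₂ w).natAbs := Finset.sum_erase_add _ _ (Finset.mem_univ v)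

end TreeRefl
end

open TreeRefl

/-- All orientations of a finite tree are related by iterated sink/source
reflections: the reflection moves act transitively on orientations. -/
theorem tree_orientations_reflection_transitive {V : Type*} [Fintype V]
    (G : SimpleGraph V) (hG : G.IsTree)
    (o₁ o₂ : V → V → Prop) (h₁ : IsOrientation G o₁) (h₂ : IsOrientation G o₂) :
    Relation.ReflTransGen (ReflectionStep G) o₁ o₂ := by
  classical
  obtain ⟨r⟩ := hG.isConnected.nonempty
  suffices H : ∀ n (o₁ o₂ : V → V → Prop), IsOrientation G o₁ → IsOrientation G o₂ →
      (∑ w, (pot hG r o₁ w - pot hG r o₂ w).natAbs) = n →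
      Relation.ReflTransGen (ReflectionStep G) o₁ o₂ from H _ o₁ o₂ h₁ h₂ rfl
  intro n
  induction n using Nat.strong_induction_on with
  | _ n ih =>
    intro o₁ o₂ h₁ h₂ hn
    by_cases hf : ∀ v, pot hG r o₁ v = pot hG r o₂ v
    · rw [ori_of_pot_eq hG r h₁ h₂ hf]
    · push_neg at hf
      obtain ⟨w0, hw0⟩ := hf
      have hsymm : ∀ (a b : V → V → Prop),
          ∑ w, (pot hG r a w - pot hG r b w).natAbs
            = ∑ w, (pot hG r b w - pot hG r a w).natAbs := by
        intro a b
        exact Finset.sum_congr rfl fun x _ => by omega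
      rcases lt_or_gt_of_ne hw0 with hlt | hgt
      · -- pot o₁ w0 < pot o₂ w0 : take a step from o₂
        obtain ⟨o₂', hstep, ho₂', hsum⟩ := step_exists hG r h₂ h₁ ⟨w0, hlt⟩
        have hm : (∑ w, (pot hG r o₁ w - pot hG r o₂' w).natAbs) + 2 = n := by
          rw [hsymm o₁ o₂', hsum, ← hsymm o₁ o₂, hn]
        have hrec := ih (n - 2) (by omega) o₁ o₂' h₁ ho₂' (by omega)
        exact hrec.tail (reflectionStep_symm hstep)
      · -- pot o₂ w0 < pot o₁ w0 : take a step from o₁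
        obtain ⟨o₁', hstep, ho₁', hsum⟩ := step_exists hG r h₁ h₂ ⟨w0, hgt⟩
        rw [hn] at hsum
        have hrec := ih (n - 2) (by omega) o₁' o₂ ho₁' h₂ (by omega)
        exact Relation.ReflTransGen.head hstep hrec
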